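/- Let a ∈ (0, 1/2] and let P be the hexagon obtained from an equilateral triangle with side length 1 + a by cutting off three congruent corner equilateral triangles with side length a. Then P does not have the Δ property: there is a side AB of P (of length a) such that no point C ∈ P satisfies dist(A,C) = dist(B,C) = 1. -/

import Mathlib

noncomputable section

local notation "E2" => EuclideanSpace ℝ (Fin 2)

/-- `A` and `B` are the endpoints of a side of the polygon `P`. -/
def IsSide (P : Set E2) (A B : E2) : Prop :=
  A ≠ B ∧ IsExtreme ℝ P (segment ℝ A B)

open scoped RealInnerProductSpace

set_option maxHeartbeats 1000000

/-- For `a ∈ (0, 1/2]`, the hexagon obtained from an equilateral triangle with side `1 + a`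
by cutting off three congruent corner equilateral triangles with side `a` does not have the
`Δ` property: it has a side `AB` of length `a` such that no point `C` of the hexagon
satisfies `dist A C = dist B C = 1`. -/
theorem cut_corner_hexagon_no_delta (a : ℝ) (ha0 : 0 < a) (ha : a ≤ 1 / 2)
    (X Y Z : E2) (hXY : dist X Y = 1 + a) (hYZ : dist Y Z = 1 + a) (hZX : dist Z X = 1 + a)
    (P : Set E2)
    (hP : P = convexHull ℝ ({X + (a / (1 + a)) • (Y - X), X + (a / (1 + a)) • (Z - X),
      Y + (a / (1 + a)) • (Z - Y), Y + (a / (1 + a)) • (X - Y),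
      Z + (a / (1 + a)) • (X - Z), Z + (a / (1 + a)) • (Y - Z)} : Set E2)) :
    ∃ A B : E2, IsSide P A B ∧ dist A B = a ∧
      ∀ C ∈ P, ¬(dist A C = 1 ∧ dist B C = 1) := by
  have ha1 : (0:ℝ) < 1 + a := by linarith only [ha0]
  set t : ℝ := a / (1 + a) with ht
  have hta : t * (1 + a) = a := div_mul_cancel₀ a (ne_of_gt ha1)
  have ht0 : 0 < t := div_pos ha0 ha1
  have ht2 : t < 1/2 := by
    rw [ht, div_lt_iff₀ ha1]; linarith only [ha, ha0]
  set y : E2 := Y - X with hy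
  set z : E2 := Z - X with hz
  set w : E2 := y + z with hw
  set v : E2 := z - y with hv
  -- norms
  have hny : ‖y‖ = 1 + a := by rw [hy, norm_sub_rev, ← dist_eq_norm]; exact hXY
  have hnz : ‖z‖ = 1 + a := by rw [hz, ← dist_eq_norm]; exact hZX
  have hvZY : v = Z - Y := by rw [hv, hz, hy]; abel
  have hnv : ‖v‖ = 1 + a := by rw [hvZY, norm_sub_rev, ← dist_eq_norm]; exact hYZ
  -- inner products
  have hyy : ⟪y, y⟫ = (1+a)^2 := by rw [real_inner_self_eq_norm_sq, hny]
  have hzz : ⟪z, z⟫ = (1+a)^2 := by rw [real_inner_self_eq_norm_sq, hnz]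
  have hvv : ⟪v, v⟫ = (1+a)^2 := by rw [real_inner_self_eq_norm_sq, hnv]
  have hzy : ⟪z, y⟫ = (1+a)^2/2 := by
    have h := norm_sub_sq_real z y
    rw [hnz, hny, show z - y = v from rfl, hnv] at h
    linarith only [h]
  have hyz : ⟪y, z⟫ = (1+a)^2/2 := by rw [real_inner_comm]; exact hzy
  have hwy : ⟪w, y⟫ = 3/2*(1+a)^2 := by
    rw [hw, inner_add_left, hyy, hzy]; ring
  have hwz : ⟪w, z⟫ = 3/2*(1+a)^2 := by
    rw [hw, inner_add_left, hyz, hzz]; ring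
  have hwv : ⟪w, v⟫ = 0 := by
    rw [hv, inner_sub_right, hwy, hwz]; ring
  have hww : ⟪w, w⟫ = 3*(1+a)^2 := by
    rw [hw]; rw [inner_add_right, hwy, hwz]; ring
  set K : ℝ := 3/2*(1+a)^2 with hK
  have hKpos : 0 < K := by rw [hK]; positivity
  -- expansion of the functional on affine combinations
  have expand : ∀ c₁ c₂ : ℝ, ⟪w, X + (c₁ • y + c₂ • z)⟫ = ⟪w, X⟫ + (c₁ + c₂) * K := by
    intro c₁ c₂
    rw [inner_add_right, inner_add_right, real_inner_smul_right, real_inner_smul_right,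
      hwy, hwz, hK]; ring
  set gX : ℝ := ⟪w, X⟫ with hgX
  -- vertices
  set A : E2 := X + t • y with hA
  set B : E2 := X + t • z with hB
  -- rewrite the other four vertices
  have e3 : Y + t • (Z - Y) = X + ((1-t) • y + t • z) := by rw [hy, hz]; module
  have e4 : Y + t • (X - Y) = X + ((1-t) • y + (0:ℝ) • z) := by rw [hy, hz]; module
  have e5 : Z + t • (X - Z) = X + ((0:ℝ) • y + (1-t) • z) := by rw [hy, hz]; module
  have e6 : Z + t • (Y - Z) = X + (t • y + (1-t) • z) := by rw [hy, hz]; module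
  have e1 : A = X + (t • y + (0:ℝ) • z) := by rw [hA]; module
  have e2 : B = X + ((0:ℝ) • y + t • z) := by rw [hB]; module
  set T : Set E2 := {X + ((1-t) • y + t • z), X + ((1-t) • y + (0:ℝ) • z),
    X + ((0:ℝ) • y + (1-t) • z), X + (t • y + (1-t) • z)} with hT
  have hP' : P = convexHull ℝ (({A, B} : Set E2) ∪ T) := by
    rw [hP, e3, e4, e5, e6, hT, Set.insert_union, Set.singleton_union]
  -- linearity of the functional
  have hlin : IsLinearMap ℝ (fun Q : E2 => ⟪w, Q⟫) :=
    ⟨fun u u' => inner_add_right _ _ _, fun c u => real_inner_smul_right _ _ _⟩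
  -- values at the vertices
  have gA : ⟪w, A⟫ = gX + t * K := by rw [e1, expand]; ring
  have gB : ⟪w, B⟫ = gX + t * K := by rw [e2, expand]; ring
  have gv3 : ⟪w, X + ((1-t) • y + t • z)⟫ = gX + 1 * K := by rw [expand]; ring
  have gv4 : ⟪w, X + ((1-t) • y + (0:ℝ) • z)⟫ = gX + (1-t) * K := by rw [expand]; ring
  have gv5 : ⟪w, X + ((0:ℝ) • y + (1-t) • z)⟫ = gX + (1-t) * K := by rw [expand]; ring
  have gv6 : ⟪w, X + (t • y + (1-t) • z)⟫ = gX + 1 * K := by rw [expand]; ring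
  have hc2 : gX + t * K ≤ gX + (1-t) * K := by nlinarith only [hKpos, ht2]
  have hc3 : gX + t * K ≤ gX + 1 * K := by nlinarith only [hKpos, ht0, ht2]
  have hc4 : gX + (1-t) * K ≤ gX + 1 * K := by nlinarith only [hKpos, ht0]
  -- lower bound on P
  have hlow : ∀ Q ∈ P, gX + t * K ≤ ⟪w, Q⟫ := by
    intro Q hQ
    rw [hP'] at hQ
    refine convexHull_min ?_ (convex_halfSpace_ge hlin (gX + t * K)) hQ
    rintro q (((rfl : q = _) | (rfl : q = _)) |
      ((rfl : q = _) | (rfl : q = _) | (rfl : q = _) | (rfl : q = _)))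
    · show gX + t * K ≤ _; rw [gA]
    · show gX + t * K ≤ _; rw [gB]
    · show gX + t * K ≤ _; rw [gv3]; exact hc3
    · show gX + t * K ≤ _; rw [gv4]; exact hc2
    · show gX + t * K ≤ _; rw [gv5]; exact hc2
    · show gX + t * K ≤ _; rw [gv6]; exact hc3
  -- upper bound on P
  have hupp : ∀ Q ∈ P, ⟪w, Q⟫ ≤ gX + 1 * K := by
    intro Q hQ
    rw [hP'] at hQ
    refine convexHull_min ?_ (convex_halfSpace_le hlin (gX + 1 * K)) hQ
    rintro q (((rfl : q = _) | (rfl : q = _)) |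
      ((rfl : q = _) | (rfl : q = _) | (rfl : q = _) | (rfl : q = _)))
    · show _ ≤ gX + 1 * K; rw [gA]; exact hc3
    · show _ ≤ gX + 1 * K; rw [gB]; exact hc3
    · show _ ≤ gX + 1 * K; rw [gv3]
    · show _ ≤ gX + 1 * K; rw [gv4]; exact hc4
    · show _ ≤ gX + 1 * K; rw [gv5]; exact hc4
    · show _ ≤ gX + 1 * K; rw [gv6]
  -- lower bound on conv T
  have hmid : ∀ Q ∈ convexHull ℝ T, gX + (1-t) * K ≤ ⟪w, Q⟫ := by
    intro Q hQ
    refine convexHull_min ?_ (convex_halfSpace_ge hlin (gX + (1-t) * K)) hQ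
    rintro q ((rfl : q = _) | (rfl : q = _) | (rfl : q = _) | (rfl : q = _))
    · show gX + (1-t) * K ≤ _; rw [gv3]; exact hc4
    · show gX + (1-t) * K ≤ _; rw [gv4]
    · show gX + (1-t) * K ≤ _; rw [gv5]
    · show gX + (1-t) * K ≤ _; rw [gv6]; exact hc4
  -- P is convex, contains A and B
  have hPc : Convex ℝ P := by rw [hP']; exact convex_convexHull ℝ _
  have hAP : A ∈ P := by
    rw [hP']; exact subset_convexHull ℝ _ (Or.inl (Set.mem_insert _ _))
  have hBP : B ∈ P := by
    rw [hP']
    exact subset_convexHull ℝ _ (Or.inl (Set.mem_insert_of_mem _ rfl))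
  have hsegsub : segment ℝ A B ⊆ P := hPc.segment_subset hAP hBP
  have hseg : ∀ x ∈ segment ℝ A B, ⟪w, x⟫ = gX + t * K := by
    rintro x ⟨c₁, c₂, hc₁, hc₂, hc, rfl⟩
    rw [inner_add_right, real_inner_smul_right, real_inner_smul_right, gA, gB]
    linear_combination (gX + t * K) * hc
  have hjoin : P = convexJoin ℝ (segment ℝ A B) (convexHull ℝ T) := by
    rw [hP', convexHull_union ⟨A, Set.mem_insert _ _⟩ ⟨_, Set.mem_insert _ _⟩,
      convexHull_pair]
  -- the exposed face equality
  have hface : segment ℝ A B = {x ∈ P | ∀ q ∈ P, (-(innerSL ℝ w)) q ≤ (-(innerSL ℝ w)) x} := by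
    ext x
    simp only [Set.mem_setOf_eq, ContinuousLinearMap.neg_apply, innerSL_apply_apply, neg_le_neg_iff]
    constructor
    · intro hx
      refine ⟨hsegsub hx, fun q hq => ?_⟩
      rw [hseg x hx]; exact hlow q hq
    · rintro ⟨hxP, hxmin⟩
      have hx1 : ⟪w, x⟫ ≤ gX + t * K := by
        have := hxmin A hAP; rw [gA] at this; exact this
      have hxJ := hxP
      rw [hjoin] at hxJ
      obtain ⟨p, hp, q, hq, c₁, c₂, hc₁, hc₂, hcs, hx⟩ := mem_convexJoin.1 hxJ
      have hgp : ⟪w, p⟫ = gX + t * K := hseg p hp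
      have hgq : gX + (1-t) * K ≤ ⟪w, q⟫ := hmid q hq
      have hgx : ⟪w, x⟫ = c₁ * ⟪w, p⟫ + c₂ * ⟪w, q⟫ := by
        rw [← hx, inner_add_right, real_inner_smul_right, real_inner_smul_right]
      have h1 : c₂ * (gX + (1-t) * K) ≤ c₂ * ⟪w, q⟫ :=
        mul_le_mul_of_nonneg_left hgq hc₂
      have key : c₁ * (gX + t * K) + c₂ * (gX + (1-t) * K) ≤ gX + t * K := by
        rw [hgp] at hgx
        linarith only [hgx, h1, hx1]
      have hc1eq : c₁ = 1 - c₂ := by linarith only [hcs]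
      rw [hc1eq] at key
      have hprod : c₂ * ((1 - 2*t) * K) ≤ 0 := by linarith only [key]
      have hpos : 0 < (1 - 2*t) * K := by nlinarith only [hKpos, ht2]
      have hc2le : c₂ ≤ 0 := by nlinarith only [hprod, hpos]
      have hc20 : c₂ = 0 := le_antisymm hc2le hc₂
      have hc11 : c₁ = 1 := by linarith only [hcs, hc20]
      have hpx : p = x := by rw [← hx, hc20, hc11]; simp
      rwa [← hpx]
  have hexp : IsExposed ℝ P (segment ℝ A B) := fun _ => ⟨-(innerSL ℝ w), hface⟩
  -- distance A B
  have hAB : A - B = t • (y - z) := by rw [hA, hB]; module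
  have hdistAB : dist A B = a := by
    rw [dist_eq_norm, hAB, norm_smul, Real.norm_eq_abs, abs_of_pos ht0,
      norm_sub_rev, show z - y = v from rfl, hnv, hta]
  have hane : A ≠ B := by
    intro h
    rw [h, dist_self] at hdistAB
    linarith only [hdistAB, ha0]
  refine ⟨A, B, ⟨hane, hexp.isExtreme⟩, hdistAB, ?_⟩
  -- nonexistence part
  rintro C hC ⟨h1, h2⟩
  set M : E2 := X + (t/2) • w with hM
  set d : E2 := C - M with hd
  have e7 : C - A = d + (t/2) • v := by rw [hd, hM, hA, hv, hw]; module
  have e8 : C - B = d + (-(t/2)) • v := by rw [hd, hM, hB, hv, hw]; module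
  have h1' : ‖C - A‖ = 1 := by rw [← dist_eq_norm, dist_comm]; exact h1
  have h2' : ‖C - B‖ = 1 := by rw [← dist_eq_norm, dist_comm]; exact h2
  have sqexp : ∀ (s : ℝ), ⟪d + s • v, d + s • v⟫ = ⟪d, d⟫ + 2 * s * ⟪d, v⟫ + s^2 * (1+a)^2 := by
    intro s
    rw [real_inner_add_add_self, real_inner_smul_right, real_inner_smul_left,
      real_inner_smul_right, hvv]
    ring
  have eq1 : ⟪d, d⟫ + 2 * (t/2) * ⟪d, v⟫ + (t/2)^2 * (1+a)^2 = 1 := by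
    rw [← sqexp, ← e7, real_inner_self_eq_norm_sq, h1']; norm_num
  have eq2 : ⟪d, d⟫ + 2 * (-(t/2)) * ⟪d, v⟫ + (-(t/2))^2 * (1+a)^2 = 1 := by
    rw [← sqexp, ← e8, real_inner_self_eq_norm_sq, h2']; norm_num
  have hdv : ⟪d, v⟫ = 0 := by
    have h2t : t * ⟪d, v⟫ = 0 := by nlinarith only [eq1, eq2]
    rcases mul_eq_zero.1 h2t with h | h
    · exact absurd h (ne_of_gt ht0)
    · exact h
  have hdd : ⟪d, d⟫ = 1 - a^2/4 := by
    have ht4 : (t/2)^2 * (1+a)^2 = a^2/4 := by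
      linear_combination ((t*(1+a)+a)/4) * hta
    rw [hdv] at eq1
    linarith only [eq1, ht4]
  -- bounds on ⟪w, d⟫
  have gM : ⟪w, M⟫ = gX + t * K := by
    have hM' : M = X + ((t/2) • y + (t/2) • z) := by rw [hM, hw]; module
    rw [hM', expand]; ring
  have hwd : ⟪w, d⟫ = ⟪w, C⟫ - ⟪w, M⟫ := by rw [hd, inner_sub_right]
  have hwd0 : 0 ≤ ⟪w, d⟫ := by
    have hl := hlow C hC; rw [hwd, gM]; linarith only [hl]
  have hwdup : ⟪w, d⟫ ≤ (1-t) * K := by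
    have hu := hupp C hC; rw [hwd, gM]; linarith only [hu]
  -- span argument: d is a multiple of w
  have hli : LinearIndependent ℝ ![w, v] := by
    rw [LinearIndependent.pair_iff]
    intro s s' hss
    have hW : s * ⟪w, w⟫ + s' * ⟪w, v⟫ = 0 := by
      have h := congrArg (fun u => ⟪w, u⟫) hss
      simp only [inner_add_right, real_inner_smul_right, inner_zero_right] at h
      exact h
    have hV : s * ⟪v, w⟫ + s' * ⟪v, v⟫ = 0 := by
      have h := congrArg (fun u => ⟪v, u⟫) hss
      simp only [inner_add_right, real_inner_smul_right, inner_zero_right] at h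
      exact h
    rw [hww, hwv] at hW
    rw [real_inner_comm w v, hwv, hvv] at hV
    have h3 : (0:ℝ) < 3*(1+a)^2 := by positivity
    constructor
    · have hs0 : s * (3*(1+a)^2) = 0 := by linarith only [hW]
      rcases mul_eq_zero.1 hs0 with h | h
      · exact h
      · exact absurd h h3.ne'
    · have hs0 : s' * ((1+a)^2) = 0 := by linarith only [hV]
      rcases mul_eq_zero.1 hs0 with h | h
      · exact h
      · exact absurd h (by positivity : (0:ℝ) < (1+a)^2).ne'
  have hspan : Submodule.span ℝ ({w, v} : Set E2) = ⊤ := by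
    have hrg : Set.range ![w, v] = {w, v} := by
      ext u; simp [Matrix.range_cons, Matrix.range_empty, or_comm]
    apply Submodule.eq_top_of_finrank_eq
    rw [← hrg, finrank_span_eq_card hli, finrank_euclideanSpace_fin, Fintype.card_fin]
  set α : ℝ := ⟪w, d⟫ / (3*(1+a)^2) with hα
  set r : E2 := d - α • w with hr
  have hwr : ⟪w, r⟫ = 0 := by
    rw [hr, inner_sub_right, real_inner_smul_right, hww, hα]
    field_simp
    ring
  have hvr : ⟪v, r⟫ = 0 := by
    rw [hr, inner_sub_right, real_inner_smul_right, real_inner_comm w v, hwv,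
      real_inner_comm d v, hdv]
    ring
  have hr0 : r = 0 := by
    obtain ⟨s, s', hss⟩ := Submodule.mem_span_pair.1
      (hspan ▸ Submodule.mem_top : r ∈ Submodule.span ℝ ({w, v} : Set E2))
    have hrr : ⟪r, r⟫ = 0 := by
      nth_rewrite 1 [← hss]
      rw [inner_add_left, real_inner_smul_left, real_inner_smul_left, hwr, hvr]
      ring
    exact inner_self_eq_zero.1 hrr
  have hdw : d = α • w := sub_eq_zero.1 hr0
  have hwdα : ⟪w, d⟫ = α * (3*(1+a)^2) := by
    rw [hdw, real_inner_smul_right, hww]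
  have hddα : ⟪d, d⟫ = α^2 * (3*(1+a)^2) := by
    rw [hdw, real_inner_smul_left, real_inner_smul_right, hww]; ring
  -- final contradiction
  have hK1 : (1-t) * K = 3/2*(1+a) := by
    rw [hK]; linear_combination (-(3/2)*(1+a)) * hta
  rw [hwdα] at hwd0 hwdup
  rw [hK1] at hwdup
  have h3 : (0:ℝ) < 3*(1+a)^2 := by positivity
  have hα0 : 0 ≤ α := by nlinarith only [hwd0, h3]
  have hs : (1+a) * α ≤ 1/2 := by nlinarith only [hwdup, ha1, hα0, mul_pos ha1 ha1]
  rw [hddα] at hdd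
  have hs0 : 0 ≤ (1+a) * α := mul_nonneg ha1.le hα0
  have hsq : ((1+a) * α) * ((1+a) * α) ≤ 1/4 := by nlinarith only [hs, hs0]
  have hle : 1 - a^2/4 ≤ 3/4 := by nlinarith only [hdd, hsq]
  nlinarith only [hle, ha0, ha]
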